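/- Let V be a finite type, c : V → V → ℝ≥0 a capacity function, S ⊆ V a subset, P ≥ 1 an integer, and let s ∈ S and t ∉ S with s ≠ t. Then the maximum all-s-t flow value of the P-fold replication c_P of S (where the sources are the P copies (s,0),…,(s,P−1) of s and the sink is the unique copy of t) equals the maximum s-t flow value of the P-reweighting c' of c with respect to S. -/

import Mathlib

/-!
STATEMENT 1: For `s ∈ S` and `t ∉ S`, the maximum all-s-t flow value of the P-fold
replication of `S` (sources: the `P` copies of `s`; sink: the unique copy of `t`)
equals the maximum s-t flow value of the P-reweighting of `c` w.r.t. `S`.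
-/

open Finset

attribute [local instance] Classical.propDecidable

noncomputable section

/-- `f` is an `s`-`t` flow for the capacity function `c`. -/
def IsFlow {W : Type*} [Fintype W] (c : W → W → NNReal) (s t : W) (f : W → W → ℝ) : Prop :=
  (∀ u v, 0 ≤ f u v ∧ f u v ≤ (c u v : ℝ)) ∧
  ∀ v, v ≠ s → v ≠ t → (∑ u, f u v) = (∑ w, f v w)

/-- The value of a flow `f` with source `s`. -/
def flowValue {W : Type*} [Fintype W] (f : W → W → ℝ) (s : W) : ℝ :=
  (∑ w, f s w) - (∑ u, f u s)

/-- The maximum `s`-`t` flow value (the greatest value attained by an `s`-`t` flow). -/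
def maxFlowValue {W : Type*} [Fintype W] (c : W → W → NNReal) (s t : W) : ℝ :=
  sSup {μ : ℝ | ∃ f, IsFlow c s t f ∧ flowValue f s = μ}

/-- `f` is an all-flow from the source set `Src` to the sink `t`. -/
def IsAllFlow {W : Type*} [Fintype W] (c : W → W → NNReal) (Src : Set W) (t : W)
    (f : W → W → ℝ) : Prop :=
  (∀ u v, 0 ≤ f u v ∧ f u v ≤ (c u v : ℝ)) ∧
  ∀ v, v ∉ Src → v ≠ t → (∑ u, f u v) = (∑ w, f v w)

/-- The maximum all-flow value from the source set `Src` to the sink `t`. -/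
def maxAllFlowValue {W : Type*} [Fintype W] (c : W → W → NNReal) (Src : Finset W) (t : W) : ℝ :=
  sSup {μ : ℝ | ∃ f, IsAllFlow c (↑Src) t f ∧ (∑ σ ∈ Src, flowValue f σ) = μ}

/-- The capacity function of the `P`-fold replication of the subset `S`. -/
def repCap {V : Type*} (c : V → V → NNReal) (S : Set V) (P : ℕ) :
    ({v : V // v ∉ S} ⊕ (↥S × Fin P)) → ({v : V // v ∉ S} ⊕ (↥S × Fin P)) → NNReal
  | Sum.inl u, Sum.inl v => c u.1 v.1
  | Sum.inl u, Sum.inr (v, _) => c u.1 v.1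
  | Sum.inr (v, _), Sum.inl u => c v.1 u.1
  | Sum.inr (u, i), Sum.inr (v, j) => if i = j then c u.1 v.1 else 0

/-- The `P`-reweighting of `c` with respect to `S`. -/
def reweight {V : Type*} (c : V → V → NNReal) (S : Set V) (P : ℕ) : V → V → NNReal :=
  fun u v => if u ∈ S ∨ v ∈ S then (P : NNReal) * c u v else c u v

namespace RepAux1


variable {V : Type*} [Fintype V]

/-- projection from the replicated vertex type back to `V`. -/
def pr (S : Set V) (P : ℕ) : ({v : V // v ∉ S} ⊕ (↥S × Fin P)) → V
  | Sum.inl u => u.1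
  | Sum.inr (v, _) => v.1

lemma sum_fiber (S : Set V) (P : ℕ) (h : ({v : V // v ∉ S} ⊕ (↥S × Fin P)) → ℝ) (u : V) :
    (∑ w, if pr S P w = u then h w else 0) =
      if hu : u ∈ S then ∑ i, h (Sum.inr (⟨u, hu⟩, i)) else h (Sum.inl ⟨u, hu⟩) := by
  rw [Fintype.sum_sum_type, Fintype.sum_prod_type]
  by_cases hu : u ∈ S
  · rw [dif_pos hu, Finset.sum_eq_zero (fun x _ => if_neg (fun hx : x.1 = u => x.2 (hx ▸ hu))),
      zero_add]
    calc ∑ y : ↥S, ∑ i : Fin P, (if pr S P (Sum.inr (y, i)) = u then h (Sum.inr (y, i)) else 0)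
        = ∑ y : ↥S, (if y = (⟨u, hu⟩ : ↥S) then ∑ i : Fin P, h (Sum.inr (y, i)) else 0) := by
          refine Finset.sum_congr rfl fun y _ => ?_
          by_cases hy : y = (⟨u, hu⟩ : ↥S)
          · subst hy; simp [pr]
          · rw [if_neg hy, Finset.sum_eq_zero]
            intro i _
            exact if_neg fun hc : y.1 = u => hy (Subtype.ext hc)
      _ = ∑ i : Fin P, h (Sum.inr (⟨u, hu⟩, i)) := by
          rw [Finset.sum_ite_eq' Finset.univ (⟨u, hu⟩ : ↥S)
            (fun y => ∑ i : Fin P, h (Sum.inr (y, i)))]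
          simp
  · rw [dif_neg hu]
    have h2 : ∑ y : ↥S, ∑ i : Fin P,
        (if pr S P (Sum.inr (y, i)) = u then h (Sum.inr (y, i)) else 0) = 0 :=
      Finset.sum_eq_zero fun y _ => Finset.sum_eq_zero fun i _ =>
        if_neg fun hc : y.1 = u => hu (hc ▸ y.2)
    rw [h2, add_zero]
    calc ∑ x : {v : V // v ∉ S}, (if pr S P (Sum.inl x) = u then h (Sum.inl x) else 0)
        = ∑ x : {v : V // v ∉ S}, (if x = (⟨u, hu⟩ : {v : V // v ∉ S}) then h (Sum.inl x) else 0) := by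
          refine Finset.sum_congr rfl fun x _ => if_congr ?_ rfl rfl
          exact ⟨fun h' => Subtype.ext h', fun h' => by rw [h']; rfl⟩
      _ = h (Sum.inl ⟨u, hu⟩) := by
          rw [Finset.sum_ite_eq' Finset.univ (⟨u, hu⟩ : {v : V // v ∉ S})
            (fun x => h (Sum.inl x))]
          simp

/-- aggregate a flow on the replicated graph down to `V`. -/
def agg (S : Set V) (P : ℕ)
    (fP : ({v : V // v ∉ S} ⊕ (↥S × Fin P)) → ({v : V // v ∉ S} ⊕ (↥S × Fin P)) → ℝ)
    (u v : V) : ℝ :=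
  ∑ w, if pr S P w = u then (∑ w', if pr S P w' = v then fP w w' else 0) else 0

lemma agg_col (S : Set V) (P : ℕ)
    (fP : ({v : V // v ∉ S} ⊕ (↥S × Fin P)) → ({v : V // v ∉ S} ⊕ (↥S × Fin P)) → ℝ) (v : V) :
    ∑ u, agg S P fP u v = ∑ w', if pr S P w' = v then (∑ w, fP w w') else 0 := by
  unfold agg
  rw [Finset.sum_comm]
  have h1 : ∀ w, (∑ u, if pr S P w = u then (∑ w', if pr S P w' = v then fP w w' else 0) else 0)
      = ∑ w', if pr S P w' = v then fP w w' else 0 := by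
    intro w
    rw [Finset.sum_ite_eq Finset.univ (pr S P w)]
    simp
  rw [Finset.sum_congr rfl fun w _ => h1 w, Finset.sum_comm]
  refine Finset.sum_congr rfl fun w' _ => ?_
  split_ifs <;> simp

lemma agg_row (S : Set V) (P : ℕ)
    (fP : ({v : V // v ∉ S} ⊕ (↥S × Fin P)) → ({v : V // v ∉ S} ⊕ (↥S × Fin P)) → ℝ) (u : V) :
    ∑ v, agg S P fP u v = ∑ w, if pr S P w = u then (∑ w', fP w w') else 0 := by
  unfold agg
  rw [Finset.sum_comm]
  refine Finset.sum_congr rfl fun w _ => ?_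
  by_cases hw : pr S P w = u
  · rw [if_pos hw, Finset.sum_congr rfl fun v (_ : v ∈ univ) => if_pos hw]
    rw [Finset.sum_comm]
    refine Finset.sum_congr rfl fun w' _ => ?_
    rw [Finset.sum_ite_eq Finset.univ (pr S P w')]
    simp
  · rw [if_neg hw]
    exact Finset.sum_eq_zero fun v _ => if_neg hw


/-- spread a flow on `V` up to the replicated graph. -/
def spread (S : Set V) (P : ℕ) (g : V → V → ℝ) :
    ({v : V // v ∉ S} ⊕ (↥S × Fin P)) → ({v : V // v ∉ S} ⊕ (↥S × Fin P)) → ℝ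
  | Sum.inl u, Sum.inl v => g u.1 v.1
  | Sum.inl u, Sum.inr (v, _) => g u.1 v.1 / P
  | Sum.inr (u, _), Sum.inl v => g u.1 v.1 / P
  | Sum.inr (u, i), Sum.inr (v, j) => if i = j then g u.1 v.1 / P else 0

lemma sum_split (S : Set V) (h : V → ℝ) :
    (∑ x : {v : V // v ∉ S}, h x.1) + (∑ y : ↥S, h y.1) = ∑ v, h v := by
  rw [← Finset.sum_filter_add_sum_filter_not Finset.univ (fun v => v ∉ S) h]
  congr 1
  · exact (Finset.sum_subtype _ (by simp) h).symm
  · rw [show Finset.univ.filter (fun v => ¬ v ∉ S) = Finset.univ.filter (fun v => v ∈ S) by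
      ext v; simp]
    exact (Finset.sum_subtype _ (by simp) h).symm

lemma spread_col_inl (S : Set V) (P : ℕ) (hP : 0 < P) (g : V → V → ℝ) (v : {v : V // v ∉ S}) :
    ∑ w, spread S P g w (Sum.inl v) = ∑ u, g u v.1 := by
  rw [Fintype.sum_sum_type, Fintype.sum_prod_type]
  have h2 : ∀ y : ↥S, (∑ i : Fin P, spread S P g (Sum.inr (y, i)) (Sum.inl v)) = g y.1 v.1 := by
    intro y
    simp only [spread, Finset.sum_const, Finset.card_univ, Fintype.card_fin, nsmul_eq_mul]
    rw [mul_div_cancel₀]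
    exact Nat.cast_ne_zero.2 hP.ne'
  rw [Finset.sum_congr rfl fun y _ => h2 y]
  exact sum_split S (fun u => g u v.1)

lemma spread_row_inl (S : Set V) (P : ℕ) (hP : 0 < P) (g : V → V → ℝ) (v : {v : V // v ∉ S}) :
    ∑ w, spread S P g (Sum.inl v) w = ∑ u, g v.1 u := by
  rw [Fintype.sum_sum_type, Fintype.sum_prod_type]
  have h2 : ∀ y : ↥S, (∑ i : Fin P, spread S P g (Sum.inl v) (Sum.inr (y, i))) = g v.1 y.1 := by
    intro y
    simp only [spread, Finset.sum_const, Finset.card_univ, Fintype.card_fin, nsmul_eq_mul]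
    rw [mul_div_cancel₀]
    exact Nat.cast_ne_zero.2 hP.ne'
  rw [Finset.sum_congr rfl fun y _ => h2 y]
  exact sum_split S (fun u => g v.1 u)

lemma spread_col_inr (S : Set V) (P : ℕ) (g : V → V → ℝ) (v : ↥S) (i : Fin P) :
    ∑ w, spread S P g w (Sum.inr (v, i)) = (∑ u, g u v.1) / P := by
  rw [Fintype.sum_sum_type, Fintype.sum_prod_type]
  have h2 : ∀ y : ↥S, (∑ j : Fin P, spread S P g (Sum.inr (y, j)) (Sum.inr (v, i)))
      = g y.1 v.1 / P := by
    intro y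
    show (∑ j : Fin P, if j = i then g y.1 v.1 / P else 0) = _
    rw [Finset.sum_ite_eq' Finset.univ i]
    simp
  rw [Finset.sum_congr rfl fun y _ => h2 y]
  rw [show (∑ x : {v : V // v ∉ S}, spread S P g (Sum.inl x) (Sum.inr (v, i)))
      = ∑ x : {v : V // v ∉ S}, g x.1 v.1 / P from rfl]
  rw [Finset.sum_div]
  rw [← sum_split S (fun u => g u v.1 / P)]

lemma spread_row_inr (S : Set V) (P : ℕ) (g : V → V → ℝ) (v : ↥S) (i : Fin P) :
    ∑ w, spread S P g (Sum.inr (v, i)) w = (∑ u, g v.1 u) / P := by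
  rw [Fintype.sum_sum_type, Fintype.sum_prod_type]
  have h2 : ∀ y : ↥S, (∑ j : Fin P, spread S P g (Sum.inr (v, i)) (Sum.inr (y, j)))
      = g v.1 y.1 / P := by
    intro y
    show (∑ j : Fin P, if i = j then g v.1 y.1 / P else 0) = _
    rw [Finset.sum_ite_eq Finset.univ i]
    simp
  rw [Finset.sum_congr rfl fun y _ => h2 y]
  rw [show (∑ x : {v : V // v ∉ S}, spread S P g (Sum.inr (v, i)) (Sum.inl x))
      = ∑ x : {v : V // v ∉ S}, g v.1 x.1 / P from rfl]
  rw [Finset.sum_div]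
  rw [← sum_split S (fun u => g v.1 u / P)]


-- direction lemmas

lemma agg_SS (S : Set V) (P : ℕ) (fP) {u v : V} (hu : u ∈ S) (hv : v ∈ S) :
    agg S P fP u v = ∑ i, ∑ j, fP (Sum.inr (⟨u, hu⟩, i)) (Sum.inr (⟨v, hv⟩, j)) := by
  rw [agg, sum_fiber S P (fun w => ∑ w', if pr S P w' = v then fP w w' else 0) u, dif_pos hu]
  refine Finset.sum_congr rfl fun i _ => ?_
  rw [sum_fiber S P (fP _) v, dif_pos hv]

lemma agg_Sn (S : Set V) (P : ℕ) (fP) {u v : V} (hu : u ∈ S) (hv : v ∉ S) :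
    agg S P fP u v = ∑ i, fP (Sum.inr (⟨u, hu⟩, i)) (Sum.inl ⟨v, hv⟩) := by
  rw [agg, sum_fiber S P (fun w => ∑ w', if pr S P w' = v then fP w w' else 0) u, dif_pos hu]
  refine Finset.sum_congr rfl fun i _ => ?_
  rw [sum_fiber S P (fP _) v, dif_neg hv]

lemma agg_nS (S : Set V) (P : ℕ) (fP) {u v : V} (hu : u ∉ S) (hv : v ∈ S) :
    agg S P fP u v = ∑ j, fP (Sum.inl ⟨u, hu⟩) (Sum.inr (⟨v, hv⟩, j)) := by
  rw [agg, sum_fiber S P (fun w => ∑ w', if pr S P w' = v then fP w w' else 0) u, dif_neg hu,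
    sum_fiber S P (fP _) v, dif_pos hv]

lemma agg_nn (S : Set V) (P : ℕ) (fP) {u v : V} (hu : u ∉ S) (hv : v ∉ S) :
    agg S P fP u v = fP (Sum.inl ⟨u, hu⟩) (Sum.inl ⟨v, hv⟩) := by
  rw [agg, sum_fiber S P (fun w => ∑ w', if pr S P w' = v then fP w w' else 0) u, dif_neg hu,
    sum_fiber S P (fP _) v, dif_neg hv]

section dirs
variable (c : V → V → NNReal) (S : Set V) (P : ℕ)

lemma forward_isFlow (hP : 1 ≤ P) (s t : V) (hst : s ≠ t) (hsS : s ∈ S) (ht : t ∉ S)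
    (fP : ({v : V // v ∉ S} ⊕ (↥S × Fin P)) → ({v : V // v ∉ S} ⊕ (↥S × Fin P)) → ℝ)
    (hfP : IsAllFlow (repCap c S P)
      (↑(Finset.univ.image (fun i : Fin P =>
        (Sum.inr (⟨s, hsS⟩, i) : {v : V // v ∉ S} ⊕ (↥S × Fin P)))))
      (Sum.inl ⟨t, ht⟩) fP) :
    IsFlow (reweight c S P) s t (agg S P fP) := by
  constructor
  · intro u v
    constructor
    · refine Finset.sum_nonneg fun w _ => ?_
      split_ifs with h1
      · exact Finset.sum_nonneg fun w' _ => by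
          split_ifs with h2
          · exact (hfP.1 w w').1
          · exact le_refl 0
      · exact le_refl 0
    · by_cases hu : u ∈ S <;> by_cases hv : v ∈ S
      · rw [agg_SS S P fP hu hv]
        calc ∑ i, ∑ j, fP (Sum.inr (⟨u, hu⟩, i)) (Sum.inr (⟨v, hv⟩, j))
            ≤ ∑ i : Fin P, ∑ j : Fin P,
              ((repCap c S P (Sum.inr (⟨u, hu⟩, i)) (Sum.inr (⟨v, hv⟩, j)) : NNReal) : ℝ) :=
              Finset.sum_le_sum fun i _ => Finset.sum_le_sum fun j _ => (hfP.1 _ _).2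
          _ = (P : ℝ) * (c u v : ℝ) := by
              simp [repCap, apply_ite (fun x : NNReal => (x : ℝ)), Finset.sum_ite_eq]
          _ = ((reweight c S P u v : NNReal) : ℝ) := by
              simp [reweight, hu]
      · rw [agg_Sn S P fP hu hv]
        calc ∑ i, fP (Sum.inr (⟨u, hu⟩, i)) (Sum.inl ⟨v, hv⟩)
            ≤ ∑ i : Fin P, ((repCap c S P (Sum.inr (⟨u, hu⟩, i)) (Sum.inl ⟨v, hv⟩) : NNReal) : ℝ) :=
              Finset.sum_le_sum fun i _ => (hfP.1 _ _).2
          _ = (P : ℝ) * (c u v : ℝ) := by simp [repCap, mul_comm]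
          _ = ((reweight c S P u v : NNReal) : ℝ) := by simp [reweight, hu]
      · rw [agg_nS S P fP hu hv]
        calc ∑ j, fP (Sum.inl ⟨u, hu⟩) (Sum.inr (⟨v, hv⟩, j))
            ≤ ∑ j : Fin P, ((repCap c S P (Sum.inl ⟨u, hu⟩) (Sum.inr (⟨v, hv⟩, j)) : NNReal) : ℝ) :=
              Finset.sum_le_sum fun j _ => (hfP.1 _ _).2
          _ = (P : ℝ) * (c u v : ℝ) := by simp [repCap, mul_comm]
          _ = ((reweight c S P u v : NNReal) : ℝ) := by simp [reweight, hv]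
      · rw [agg_nn S P fP hu hv]
        calc fP (Sum.inl ⟨u, hu⟩) (Sum.inl ⟨v, hv⟩)
            ≤ ((repCap c S P (Sum.inl ⟨u, hu⟩) (Sum.inl ⟨v, hv⟩) : NNReal) : ℝ) := (hfP.1 _ _).2
          _ = ((reweight c S P u v : NNReal) : ℝ) := by simp [repCap, reweight, hu, hv]
  · intro v hvs hvt
    rw [agg_col, agg_row]
    refine Finset.sum_congr rfl fun w _ => ?_
    by_cases hw : pr S P w = v
    · rw [if_pos hw, if_pos hw]
      refine hfP.2 w ?_ ?_
      · intro hmem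
        simp only [Finset.coe_image, Finset.coe_univ, Set.image_univ, Set.mem_range] at hmem
        obtain ⟨i, hi⟩ := hmem
        cases w with
        | inl x => cases hi
        | inr p =>
          obtain ⟨y, j⟩ := p
          injection hi with hi'
          have : y = ⟨s, hsS⟩ := (Prod.ext_iff.1 hi'.symm).1
          apply hvs
          rw [← hw, this]
          rfl
      · intro hw'
        cases w with
        | inl x =>
          injection hw' with h'
          apply hvt
          rw [← hw, h']
          rfl
        | inr p => cases hw'
    · rw [if_neg hw, if_neg hw]

lemma forward_value (hP : 1 ≤ P) (s t : V) (hsS : s ∈ S) (ht : t ∉ S)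
    (fP : ({v : V // v ∉ S} ⊕ (↥S × Fin P)) → ({v : V // v ∉ S} ⊕ (↥S × Fin P)) → ℝ) :
    flowValue (agg S P fP) s =
      ∑ σ ∈ Finset.univ.image (fun i : Fin P =>
        (Sum.inr (⟨s, hsS⟩, i) : {v : V // v ∉ S} ⊕ (↥S × Fin P))), flowValue fP σ := by
  have hinj : ∀ x ∈ (Finset.univ : Finset (Fin P)), ∀ y ∈ Finset.univ,
      (Sum.inr (⟨s, hsS⟩, x) : {v : V // v ∉ S} ⊕ (↥S × Fin P)) = Sum.inr (⟨s, hsS⟩, y) → x = y := by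
    intro x _ y _ h
    injection h with h'
    exact (Prod.ext_iff.1 h').2
  rw [Finset.sum_image hinj, flowValue, agg_row, agg_col, ← Finset.sum_sub_distrib]
  have : ∀ w, ((if pr S P w = s then (∑ w', fP w w') else 0) -
      (if pr S P w = s then (∑ w', fP w' w) else 0)) =
      (if pr S P w = s then ((∑ w', fP w w') - (∑ w', fP w' w)) else 0) := by
    intro w; split_ifs <;> simp
  rw [Finset.sum_congr rfl fun w _ => this w,
    sum_fiber S P (fun w => (∑ w', fP w w') - (∑ w', fP w' w)) s, dif_pos hsS]
  rfl

lemma reverse_isAllFlow (hP : 1 ≤ P) (s t : V) (hst : s ≠ t) (hsS : s ∈ S) (ht : t ∉ S)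
    (g : V → V → ℝ) (hg : IsFlow (reweight c S P) s t g) :
    IsAllFlow (repCap c S P)
      (↑(Finset.univ.image (fun i : Fin P =>
        (Sum.inr (⟨s, hsS⟩, i) : {v : V // v ∉ S} ⊕ (↥S × Fin P)))))
      (Sum.inl ⟨t, ht⟩) (spread S P g) := by
  have hP0 : (0 : ℝ) < P := by exact_mod_cast hP
  constructor
  · rintro (u | ⟨u, i⟩) (v | ⟨v, j⟩)
    · refine ⟨(hg.1 u.1 v.1).1, le_trans (hg.1 u.1 v.1).2 ?_⟩
      have : reweight c S P u.1 v.1 = c u.1 v.1 := by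
        simp [reweight, u.2, v.2]
      rw [this]; rfl
    · constructor
      · exact div_nonneg (hg.1 u.1 v.1).1 hP0.le
      · show g u.1 v.1 / P ≤ ((c u.1 v.1 : NNReal) : ℝ)
        rw [div_le_iff₀ hP0]
        refine le_trans (hg.1 u.1 v.1).2 ?_
        have : reweight c S P u.1 v.1 = (P : NNReal) * c u.1 v.1 := by
          simp [reweight, v.2]
        rw [this]
        push_cast
        rw [mul_comm]
    · constructor
      · exact div_nonneg (hg.1 u.1 v.1).1 hP0.le
      · show g u.1 v.1 / P ≤ ((c u.1 v.1 : NNReal) : ℝ)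
        rw [div_le_iff₀ hP0]
        refine le_trans (hg.1 u.1 v.1).2 ?_
        have : reweight c S P u.1 v.1 = (P : NNReal) * c u.1 v.1 := by
          simp [reweight, u.2]
        rw [this]
        push_cast
        rw [mul_comm]
    · constructor
      · show 0 ≤ if i = j then g u.1 v.1 / P else 0
        split_ifs
        · exact div_nonneg (hg.1 u.1 v.1).1 hP0.le
        · exact le_refl 0
      · show (if i = j then g u.1 v.1 / P else 0) ≤
          (((if i = j then c u.1 v.1 else 0 : NNReal)) : ℝ)
        split_ifs with h
        · rw [div_le_iff₀ hP0]
          refine le_trans (hg.1 u.1 v.1).2 ?_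
          have : reweight c S P u.1 v.1 = (P : NNReal) * c u.1 v.1 := by
            simp [reweight, u.2]
          rw [this]
          push_cast
          rw [mul_comm]
        · simp
  · rintro (v | ⟨v, i⟩) hv hvt
    · have hvt' : v.1 ≠ t := by
        intro h
        exact hvt (by rw [Sum.inl.injEq]; exact Subtype.ext h)
      have hvs : v.1 ≠ s := fun h => v.2 (h ▸ hsS)
      rw [spread_col_inl S P hP g v, spread_row_inl S P hP g v]
      exact hg.2 v.1 hvs hvt'
    · have hvs : v.1 ≠ s := by
        intro h
        apply hv
        simp only [Finset.coe_image, Finset.coe_univ, Set.image_univ, Set.mem_range]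
        exact ⟨i, by rw [show (⟨s, hsS⟩ : ↥S) = v from Subtype.ext h.symm]⟩
      have hvt' : v.1 ≠ t := fun h => ht (h ▸ v.2)
      rw [spread_col_inr S P g v i, spread_row_inr S P g v i, hg.2 v.1 hvs hvt']

lemma reverse_value (hP : 1 ≤ P) (s t : V) (hsS : s ∈ S) (g : V → V → ℝ) :
    (∑ σ ∈ Finset.univ.image (fun i : Fin P =>
        (Sum.inr (⟨s, hsS⟩, i) : {v : V // v ∉ S} ⊕ (↥S × Fin P))),
      flowValue (spread S P g) σ) = flowValue g s := by
  have hP0 : (0 : ℝ) < P := by exact_mod_cast hP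
  have hinj : ∀ x ∈ (Finset.univ : Finset (Fin P)), ∀ y ∈ Finset.univ,
      (Sum.inr (⟨s, hsS⟩, x) : {v : V // v ∉ S} ⊕ (↥S × Fin P)) = Sum.inr (⟨s, hsS⟩, y) → x = y := by
    intro x _ y _ h
    injection h with h'
    exact (Prod.ext_iff.1 h').2
  rw [Finset.sum_image hinj]
  have : ∀ i : Fin P, flowValue (spread S P g)
      (Sum.inr ((⟨s, hsS⟩ : ↥S), i) : {v : V // v ∉ S} ⊕ (↥S × Fin P)) = flowValue g s / P := by
    intro i
    rw [flowValue, spread_row_inr S P g ⟨s, hsS⟩ i, spread_col_inr S P g ⟨s, hsS⟩ i,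
      ← sub_div, flowValue]
  rw [Finset.sum_congr rfl fun i _ => this i, Finset.sum_const, Finset.card_univ,
    Fintype.card_fin, nsmul_eq_mul, mul_div_cancel₀]
  exact hP0.ne'


end dirs
end RepAux1

theorem maxAllFlow_repCap_eq_maxFlow_reweight {V : Type*} [Fintype V]
    (c : V → V → NNReal) (S : Set V) (P : ℕ) (hP : 1 ≤ P)
    (s t : V) (hst : s ≠ t) (hsS : s ∈ S) (ht : t ∉ S) :
    maxAllFlowValue (repCap c S P)
      (Finset.univ.image (fun i : Fin P =>
        (Sum.inr (⟨s, hsS⟩, i) : {v : V // v ∉ S} ⊕ (↥S × Fin P))))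
      (Sum.inl ⟨t, ht⟩) =
    maxFlowValue (reweight c S P) s t := by
  unfold maxAllFlowValue maxFlowValue
  congr 1
  ext μ
  constructor
  · rintro ⟨fP, hfP, rfl⟩
    exact ⟨RepAux1.agg S P fP, RepAux1.forward_isFlow c S P hP s t hst hsS ht fP hfP,
      RepAux1.forward_value S P hP s t hsS ht fP⟩
  · rintro ⟨g, hg, rfl⟩
    exact ⟨RepAux1.spread S P g, RepAux1.reverse_isAllFlow c S P hP s t hst hsS ht g hg,
      RepAux1.reverse_value S P hP s t hsS g⟩

end
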